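/- L^∘ is a conservative extension of L: a sequent A1,…,An → B in which no type contains the connective ^∘ is derivable in L^∘ if and only if it is derivable in L. -/

import Mathlib

/-- Types of the Lambek calculus with the cyclic shift `L^∘`, built from
primitive types `P` by `\` (`ldiv A B = A \ B`), `/` (`rdiv B A = B / A`),
`·` (`mul`) and the cyclic shift `^∘` (`circ`). -/
inductive Fm (P : Type) : Type
  | prim : P → Fm P
  | ldiv : Fm P → Fm P → Fm P
  | rdiv : Fm P → Fm P → Fm P
  | mul  : Fm P → Fm P → Fm P
  | circ : Fm P → Fm P
deriving DecidableEq

open Fm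

/-- Derivability of sequents in the Lambek calculus with the cyclic shift `L^∘`.
The Boolean flag indicates whether the rule (cut) may be used:
`Dv P true` is `L^∘` (with cut), `Dv P false` is its cut-free part. -/
inductive Dv (P : Type) : Bool → List (Fm P) → Fm P → Prop
  | ax (c : Bool) (A : Fm P) :
      Dv P c [A] A
  | ldivL (c : Bool) (Γ Δ Pi : List (Fm P)) (A B C : Fm P) :
      Dv P c (Γ ++ B :: Δ) C → Dv P c Pi A → Pi ≠ [] →
      Dv P c (Γ ++ Pi ++ ldiv A B :: Δ) C
  | ldivR (c : Bool) (Pi : List (Fm P)) (A B : Fm P) :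
      Dv P c (A :: Pi) B → Pi ≠ [] →
      Dv P c Pi (ldiv A B)
  | rdivL (c : Bool) (Γ Δ Pi : List (Fm P)) (A B C : Fm P) :
      Dv P c (Γ ++ B :: Δ) C → Dv P c Pi A → Pi ≠ [] →
      Dv P c (Γ ++ rdiv B A :: (Pi ++ Δ)) C
  | rdivR (c : Bool) (Pi : List (Fm P)) (A B : Fm P) :
      Dv P c (Pi ++ [A]) B → Pi ≠ [] →
      Dv P c Pi (rdiv B A)
  | mulL (c : Bool) (Γ Δ : List (Fm P)) (A B C : Fm P) :
      Dv P c (Γ ++ A :: B :: Δ) C →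
      Dv P c (Γ ++ mul A B :: Δ) C
  | mulR (c : Bool) (Pi Psi : List (Fm P)) (A B : Fm P) :
      Dv P c Pi A → Dv P c Psi B → Pi ≠ [] → Psi ≠ [] →
      Dv P c (Pi ++ Psi) (mul A B)
  | circR (c : Bool) (Pi : List (Fm P)) (A : Fm P) :
      Dv P c Pi A →
      Dv P c Pi (circ A)
  | circL (c : Bool) (A B : Fm P) :
      Dv P c [B] (circ A) →
      Dv P c [circ B] (circ A)
  | circC (c : Bool) (Pi Psi : List (Fm P)) (A : Fm P) :
      Dv P c (Pi ++ Psi) (circ A) → Pi ≠ [] → Psi ≠ [] →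
      Dv P c (Psi ++ Pi) (circ A)
  | cut (Γ Δ Pi : List (Fm P)) (A B : Fm P) :
      Dv P true Pi A → Dv P true (Γ ++ A :: Δ) B → Pi ≠ [] →
      Dv P true (Γ ++ Pi ++ Δ) B

/-- Derivability in the pure Lambek calculus `L` (with cut): the same rules as
`L^∘` but without the rules for the cyclic shift `^∘`. -/
inductive DvL (P : Type) : List (Fm P) → Fm P → Prop
  | ax (A : Fm P) :
      DvL P [A] A
  | ldivL (Γ Δ Pi : List (Fm P)) (A B C : Fm P) :
      DvL P (Γ ++ B :: Δ) C → DvL P Pi A → Pi ≠ [] →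
      DvL P (Γ ++ Pi ++ Fm.ldiv A B :: Δ) C
  | ldivR (Pi : List (Fm P)) (A B : Fm P) :
      DvL P (A :: Pi) B → Pi ≠ [] →
      DvL P Pi (Fm.ldiv A B)
  | rdivL (Γ Δ Pi : List (Fm P)) (A B C : Fm P) :
      DvL P (Γ ++ B :: Δ) C → DvL P Pi A → Pi ≠ [] →
      DvL P (Γ ++ Fm.rdiv B A :: (Pi ++ Δ)) C
  | rdivR (Pi : List (Fm P)) (A B : Fm P) :
      DvL P (Pi ++ [A]) B → Pi ≠ [] →
      DvL P Pi (Fm.rdiv B A)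
  | mulL (Γ Δ : List (Fm P)) (A B C : Fm P) :
      DvL P (Γ ++ A :: B :: Δ) C →
      DvL P (Γ ++ Fm.mul A B :: Δ) C
  | mulR (Pi Psi : List (Fm P)) (A B : Fm P) :
      DvL P Pi A → DvL P Psi B → Pi ≠ [] → Psi ≠ [] →
      DvL P (Pi ++ Psi) (Fm.mul A B)
  | cut (Γ Δ Pi : List (Fm P)) (A B : Fm P) :
      DvL P Pi A → DvL P (Γ ++ A :: Δ) B → Pi ≠ [] →
      DvL P (Γ ++ Pi ++ Δ) B

/-- A type contains no occurrence of the cyclic shift connective `^∘`. -/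
def circFree {P : Type} : Fm P → Prop
  | Fm.prim _ => True
  | Fm.ldiv A B => circFree A ∧ circFree B
  | Fm.rdiv A B => circFree A ∧ circFree B
  | Fm.mul A B => circFree A ∧ circFree B
  | Fm.circ _ => False

namespace Conserv

variable {P : Type}

/-- Every DvL-derivable antecedent is nonempty. -/
theorem DvL_ne {Γ : List (Fm P)} {A : Fm P} (h : DvL P Γ A) : Γ ≠ [] := by
  induction h with
  | ax A => simp
  | ldivL Γ Δ Pi A B C h1 h2 hne ih1 ih2 => simp
  | ldivR Pi A B h hne ih => exact hne
  | rdivL Γ Δ Pi A B C h1 h2 hne ih1 ih2 => simp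
  | rdivR Pi A B h hne ih => exact hne
  | mulL Γ Δ A B C h ih => simp
  | mulR Pi Psi A B h1 h2 hne1 hne2 ih1 ih2 => simp [hne1]
  | cut Γ Δ Pi A B h1 h2 hne ih1 ih2 => simp [hne]

/-- Derivable-from set of a formula. -/
def Dseq (P : Type) (A : Fm P) : Set (List (Fm P)) := {Φ | DvL P Φ A}

/-- Closure operator on sets of lists, defined via syntactic contexts. -/
def cl (P : Type) (X : Set (List (Fm P))) : Set (List (Fm P)) :=
  {Φ | Φ ≠ [] ∧ ∀ Γ Δ C, (∀ Ψ ∈ X, DvL P (Γ ++ Ψ ++ Δ) C) →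
      DvL P (Γ ++ Φ ++ Δ) C}

theorem cl_mono {X Y : Set (List (Fm P))} (h : X ⊆ Y) : cl P X ⊆ cl P Y := by
  rintro Φ ⟨hne, hΦ⟩
  exact ⟨hne, fun Γ Δ C hh => hΦ Γ Δ C (fun Ψ hΨ => hh Ψ (h hΨ))⟩

theorem subset_cl {X : Set (List (Fm P))} (hX : ∀ Φ ∈ X, Φ ≠ []) : X ⊆ cl P X :=
  fun Φ hΦ => ⟨hX Φ hΦ, fun Γ Δ C hh => hh Φ hΦ⟩

theorem cl_idem {X : Set (List (Fm P))} : cl P (cl P X) ⊆ cl P X := by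
  rintro Φ ⟨hne, hΦ⟩
  refine ⟨hne, fun Γ Δ C hh => ?_⟩
  exact hΦ Γ Δ C (fun Ψ hΨ => hΨ.2 Γ Δ C hh)

/-- Closure under cyclic shifts. -/
def CycCl (X : Set (List (Fm P))) : Prop :=
  ∀ x y : List (Fm P), x ++ y ∈ X → x ≠ [] → y ≠ [] → y ++ x ∈ X

/-- Least superset of `X` closed under cyclic shifts and the closure `cl`. -/
def csem (P : Type) (X : Set (List (Fm P))) : Set (List (Fm P)) :=
  ⋂₀ {Y | X ⊆ Y ∧ CycCl Y ∧ cl P Y ⊆ Y}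

theorem csem_least {X Y : Set (List (Fm P))} (h1 : X ⊆ Y) (h2 : CycCl Y)
    (h3 : cl P Y ⊆ Y) : csem P X ⊆ Y :=
  fun _ hΦ => hΦ Y ⟨h1, h2, h3⟩

theorem subset_csem {X : Set (List (Fm P))} : X ⊆ csem P X :=
  fun _ hΦ => fun Y hY => hY.1 hΦ

theorem csem_cyc {X : Set (List (Fm P))} : CycCl (csem P X) :=
  fun x y hxy hx hy => fun Y hY => hY.2.1 x y (hxy Y hY) hx hy

theorem cl_csem {X : Set (List (Fm P))} : cl P (csem P X) ⊆ csem P X := by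
  intro Φ hΦ Y hY
  exact hY.2.2 (cl_mono (csem_least hY.1 hY.2.1 hY.2.2) hΦ)

/-- Semantics of formulas. -/
def sem (P : Type) : Fm P → Set (List (Fm P))
  | .prim p => Dseq P (.prim p)
  | .ldiv A B => {w | w ≠ [] ∧ ∀ u ∈ sem P A, u ++ w ∈ sem P B}
  | .rdiv B A => {w | w ≠ [] ∧ ∀ u ∈ sem P A, w ++ u ∈ sem P B}
  | .mul A B => cl P {Φ | ∃ u v, u ∈ sem P A ∧ v ∈ sem P B ∧ Φ = u ++ v}
  | .circ A => csem P (sem P A)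

/-- Each semantic value consists of nonempty lists and is `cl`-closed. -/
theorem sem_proper (A : Fm P) :
    (∀ Φ ∈ sem P A, Φ ≠ []) ∧ cl P (sem P A) ⊆ sem P A := by
  induction A with
  | prim p =>
    constructor
    · intro Φ hΦ; exact DvL_ne hΦ
    · rintro Φ ⟨hne, hΦ⟩
      have := hΦ [] [] (.prim p) (fun Ψ hΨ => by have h' : DvL P Ψ (.prim p) := hΨ; simpa using h')
      exact (by simpa using this : DvL P Φ (.prim p))
  | ldiv A B ihA ihB =>
    constructor
    · rintro Φ ⟨hne, _⟩; exact hne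
    · rintro w ⟨hne, hw⟩
      refine ⟨hne, fun u hu => ?_⟩
      refine ihB.2 ⟨by simp [ihA.1 u hu], fun Γ Δ C hh => ?_⟩
      have := hw (Γ ++ u) Δ C (fun Ψ hΨ => by
        have := hh (u ++ Ψ) (hΨ.2 u hu)
        simpa [List.append_assoc] using this)
      simpa [List.append_assoc] using this
  | rdiv B A ihB ihA =>
    constructor
    · rintro Φ ⟨hne, _⟩; exact hne
    · rintro w ⟨hne, hw⟩
      refine ⟨hne, fun u hu => ?_⟩
      refine ihB.2 ⟨by simp [hne], fun Γ Δ C hh => ?_⟩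
      have := hw Γ (u ++ Δ) C (fun Ψ hΨ => by
        have := hh (Ψ ++ u) (hΨ.2 u hu)
        simpa [List.append_assoc] using this)
      simpa [List.append_assoc] using this
  | mul A B ihA ihB =>
    constructor
    · rintro Φ ⟨hne, _⟩; exact hne
    · exact cl_idem
  | circ A ihA =>
    constructor
    · intro Φ hΦ
      have : csem P (sem P A) ⊆ {Φ : List (Fm P) | Φ ≠ []} := by
        refine csem_least ihA.1 ?_ ?_
        · intro x y hxy hx hy; simp [hy]
        · rintro Φ ⟨hne, _⟩; exact hne
      exact this hΦ
    · exact cl_csem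

theorem sem_ne {A : Fm P} {Φ : List (Fm P)} (h : Φ ∈ sem P A) : Φ ≠ [] :=
  (sem_proper A).1 Φ h

theorem sem_closed {A : Fm P} : cl P (sem P A) ⊆ sem P A := (sem_proper A).2

/-- Truth lemma for circ-free formulas. -/
theorem truth (A : Fm P) (hA : circFree A) :
    sem P A ⊆ Dseq P A ∧ [A] ∈ sem P A := by
  induction A with
  | prim p => exact ⟨fun Φ hΦ => hΦ, DvL.ax _⟩
  | ldiv A B ihA ihB =>
    obtain ⟨hA, hB⟩ := hA
    obtain ⟨ihA1, ihA2⟩ := ihA hA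
    obtain ⟨ihB1, ihB2⟩ := ihB hB
    constructor
    · rintro w ⟨hne, hw⟩
      exact DvL.ldivR w A B (ihB1 (hw [A] ihA2)) hne
    · refine ⟨by simp, fun u hu => ?_⟩
      refine sem_closed ⟨by simp [sem_ne hu], fun Γ Δ C hh => ?_⟩
      have h1 : DvL P (Γ ++ B :: Δ) C := by simpa using hh [B] ihB2
      have h2 : DvL P u A := ihA1 hu
      have := DvL.ldivL Γ Δ u A B C h1 h2 (sem_ne hu)
      simpa [List.append_assoc] using this
  | rdiv B A ihB ihA =>
    obtain ⟨hB, hA⟩ := hA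
    obtain ⟨ihB1, ihB2⟩ := ihB hB
    obtain ⟨ihA1, ihA2⟩ := ihA hA
    constructor
    · rintro w ⟨hne, hw⟩
      exact DvL.rdivR w A B (ihB1 (hw [A] ihA2)) hne
    · refine ⟨by simp, fun u hu => ?_⟩
      refine sem_closed ⟨by simp, fun Γ Δ C hh => ?_⟩
      have h1 : DvL P (Γ ++ B :: Δ) C := by simpa using hh [B] ihB2
      have h2 : DvL P u A := ihA1 hu
      have := DvL.rdivL Γ Δ u A B C h1 h2 (sem_ne hu)
      simpa [List.append_assoc] using this
  | mul A B ihA ihB =>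
    obtain ⟨hA, hB⟩ := hA
    obtain ⟨ihA1, ihA2⟩ := ihA hA
    obtain ⟨ihB1, ihB2⟩ := ihB hB
    constructor
    · rintro Φ ⟨hne, hΦ⟩
      have := hΦ [] [] (.mul A B) (fun Ψ hΨ => by
        obtain ⟨u, v, hu, hv, rfl⟩ := hΨ
        simpa using DvL.mulR u v A B (ihA1 hu) (ihB1 hv) (sem_ne hu) (sem_ne hv))
      exact (by simpa using this : DvL P Φ (.mul A B))
    · refine ⟨by simp, fun Γ Δ C hh => ?_⟩
      have : DvL P (Γ ++ A :: B :: Δ) C := by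
        have := hh ([A] ++ [B]) ⟨[A], [B], ihA2, ihB2, rfl⟩
        simpa using this
      simpa using DvL.mulL Γ Δ A B C this
  | circ A ihA => exact absurd hA (by simp [circFree])

/-- Instantiation of a sequence of formulas by members of their semantics. -/
inductive Inst (P : Type) : List (Fm P) → List (Fm P) → Prop
  | nil : Inst P [] []
  | cons {A : Fm P} {Γ u Φ : List (Fm P)} :
      u ∈ sem P A → Inst P Γ Φ → Inst P (A :: Γ) (u ++ Φ)

theorem inst_append {Γ Δ a b : List (Fm P)} (h1 : Inst P Γ a) (h2 : Inst P Δ b) :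
    Inst P (Γ ++ Δ) (a ++ b) := by
  induction h1 with
  | nil => simpa using h2
  | cons hu _ ih => simpa [List.append_assoc] using Inst.cons hu ih

theorem inst_append_inv {Γ Δ Φ : List (Fm P)} (h : Inst P (Γ ++ Δ) Φ) :
    ∃ a b, Inst P Γ a ∧ Inst P Δ b ∧ Φ = a ++ b := by
  induction Γ generalizing Φ with
  | nil => exact ⟨[], Φ, Inst.nil, by simpa using h, by simp⟩
  | cons A Γ ih =>
    cases h with
    | cons hu h' =>
      obtain ⟨a, b, ha, hb, rfl⟩ := ih h'
      exact ⟨_ ++ a, b, Inst.cons hu ha, hb, by simp [List.append_assoc]⟩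

theorem inst_single {A : Fm P} {Φ : List (Fm P)} (h : Inst P [A] Φ) :
    Φ ∈ sem P A := by
  cases h with
  | cons hu h' => cases h'; simpa using hu

theorem inst_single' {A : Fm P} {u : List (Fm P)} (h : u ∈ sem P A) :
    Inst P [A] u := by
  simpa using Inst.cons h Inst.nil

theorem inst_ne {Γ Φ : List (Fm P)} (h : Inst P Γ Φ) (hΓ : Γ ≠ []) : Φ ≠ [] := by
  cases h with
  | nil => exact absurd rfl hΓ
  | cons hu _ => simp [sem_ne hu]

/-- Soundness of `L^∘` with respect to the model. -/
theorem sound {c : Bool} {Γ : List (Fm P)} {B : Fm P} (h : Dv P c Γ B) :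
    ∀ Φ, Inst P Γ Φ → Φ ∈ sem P B := by
  induction h with
  | ax c A => exact fun Φ hΦ => inst_single hΦ
  | ldivL c Γ Δ Pi A B C h1 h2 hne ih1 ih2 =>
    intro Φ hΦ
    obtain ⟨gp, rest2, hgp, hrest2, rfl⟩ := inst_append_inv hΦ
    obtain ⟨g, p, hg, hp, rfl⟩ := inst_append_inv hgp
    cases hrest2 with
    | cons hw hd =>
      rename_i w d
      have hpA : p ∈ sem P A := ih2 p hp
      have hpw : p ++ w ∈ sem P B := hw.2 p hpA
      have : Inst P (Γ ++ B :: Δ) (g ++ ((p ++ w) ++ d)) :=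
        inst_append hg (Inst.cons hpw hd)
      have := ih1 _ this
      simpa [List.append_assoc] using this
  | ldivR c Pi A B h hne ih =>
    intro Φ hΦ
    refine ⟨inst_ne hΦ hne, fun u hu => ?_⟩
    exact ih (u ++ Φ) (by simpa using Inst.cons hu hΦ)
  | rdivL c Γ Δ Pi A B C h1 h2 hne ih1 ih2 =>
    intro Φ hΦ
    obtain ⟨g, rest, hg, hrest, rfl⟩ := inst_append_inv hΦ
    cases hrest with
    | cons hw hrest2 =>
      rename_i w rest2
      obtain ⟨p, d, hp, hd, rfl⟩ := inst_append_inv hrest2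
      have hpA : p ∈ sem P A := ih2 p hp
      have hwp : w ++ p ∈ sem P B := hw.2 p hpA
      have : Inst P (Γ ++ B :: Δ) (g ++ ((w ++ p) ++ d)) :=
        inst_append hg (Inst.cons hwp hd)
      have := ih1 _ this
      simpa [List.append_assoc] using this
  | rdivR c Pi A B h hne ih =>
    intro Φ hΦ
    refine ⟨inst_ne hΦ hne, fun u hu => ?_⟩
    have : Inst P (Pi ++ [A]) (Φ ++ u) := inst_append hΦ (inst_single' hu)
    exact ih (Φ ++ u) this
  | mulL c Γ Δ A B C h ih =>
    intro Φ hΦ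
    obtain ⟨g, rest, hg, hrest, rfl⟩ := inst_append_inv hΦ
    cases hrest with
    | cons hw hd =>
      rename_i w d
      obtain ⟨hwne, hwcl⟩ := hw
      refine sem_closed ⟨by simp [hwne], fun Γ' Δ' C' hh => ?_⟩
      have key := hwcl (Γ' ++ g) (d ++ Δ') C' (fun Ψ hΨ => by
        obtain ⟨u, v, hu, hv, rfl⟩ := hΨ
        have : Inst P (Γ ++ A :: B :: Δ) (g ++ (u ++ (v ++ d))) :=
          inst_append hg (Inst.cons hu (Inst.cons hv hd))
        have := hh _ (ih _ this)
        simpa [List.append_assoc] using this)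
      simpa [List.append_assoc] using key
  | mulR c Pi Psi A B h1 h2 hne1 hne2 ih1 ih2 =>
    intro Φ hΦ
    obtain ⟨p, q, hp, hq, rfl⟩ := inst_append_inv hΦ
    have hX : p ++ q ∈ {Φ : List (Fm P) | ∃ u v, u ∈ sem P A ∧ v ∈ sem P B ∧ Φ = u ++ v} :=
      ⟨p, q, ih1 p hp, ih2 q hq, rfl⟩
    exact ⟨by simp [sem_ne (ih1 p hp)], fun Γ Δ C hh => hh _ hX⟩
  | circR c Pi A h ih =>
    intro Φ hΦ
    exact subset_csem (ih Φ hΦ)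
  | circL c A B h ih =>
    intro Φ hΦ
    have hΦB : Φ ∈ csem P (sem P B) := inst_single hΦ
    have : csem P (sem P B) ⊆ csem P (sem P A) := by
      refine csem_least ?_ csem_cyc cl_csem
      intro u hu
      exact ih u (inst_single' hu)
    exact this hΦB
  | circC c Pi Psi A h hne1 hne2 ih =>
    intro Φ hΦ
    obtain ⟨q, p, hq, hp, rfl⟩ := inst_append_inv hΦ
    have := ih (p ++ q) (inst_append hp hq)
    exact csem_cyc p q this (inst_ne hp hne1) (inst_ne hq hne2)
  | cut Γ Δ Pi A B h1 h2 hne ih1 ih2 =>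
    intro Φ hΦ
    obtain ⟨gp, d, hgp, hd, rfl⟩ := inst_append_inv hΦ
    obtain ⟨g, p, hg, hp, rfl⟩ := inst_append_inv hgp
    have hpA : p ∈ sem P A := ih1 p hp
    have := ih2 _ (inst_append hg (Inst.cons hpA hd))
    simpa [List.append_assoc] using this

/-- Embedding `L` into `L^∘`. -/
theorem dvl_dv {Γ : List (Fm P)} {B : Fm P} (h : DvL P Γ B) : Dv P true Γ B := by
  induction h with
  | ax A => exact Dv.ax _ A
  | ldivL Γ Δ Pi A B C _ _ hne ih1 ih2 => exact Dv.ldivL _ Γ Δ Pi A B C ih1 ih2 hne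
  | ldivR Pi A B _ hne ih => exact Dv.ldivR _ Pi A B ih hne
  | rdivL Γ Δ Pi A B C _ _ hne ih1 ih2 => exact Dv.rdivL _ Γ Δ Pi A B C ih1 ih2 hne
  | rdivR Pi A B _ hne ih => exact Dv.rdivR _ Pi A B ih hne
  | mulL Γ Δ A B C _ ih => exact Dv.mulL _ Γ Δ A B C ih
  | mulR Pi Psi A B _ _ hne1 hne2 ih1 ih2 => exact Dv.mulR _ Pi Psi A B ih1 ih2 hne1 hne2
  | cut Γ Δ Pi A B _ _ hne ih1 ih2 => exact Dv.cut Γ Δ Pi A B ih1 ih2 hne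

theorem inst_refl {Γ : List (Fm P)} (hΓ : ∀ A ∈ Γ, circFree A) : Inst P Γ Γ := by
  induction Γ with
  | nil => exact Inst.nil
  | cons A Γ ih =>
    have h1 : [A] ∈ sem P A := (truth A (hΓ A (by simp))).2
    have := Inst.cons h1 (ih (fun B hB => hΓ B (by simp [hB])))
    simpa using this

end Conserv


/-- `L^∘` is a conservative extension of `L`: a sequent in which no type
contains `^∘` is derivable in `L^∘` iff it is derivable in `L`. -/
theorem Lcirc_conservative_over_L (P : Type) (Γ : List (Fm P)) (B : Fm P)
    (hΓ : ∀ A ∈ Γ, circFree A) (hB : circFree B) :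
    Dv P true Γ B ↔ DvL P Γ B := by
  constructor
  · intro h
    exact (Conserv.truth B hB).1 (Conserv.sound h Γ (Conserv.inst_refl hΓ))
  · exact Conserv.dvl_dv
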